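/- Let F = F_{2^n} and let E/F be an elliptic curve given by Y² + a1·XY + a3·Y = X³ + a2·X² + a4·X + a6 with a1 ≠ 0. The map E(F) → F_2 sending the identity to 0 and a point P ≠ 0 to Tr_{F/F_2}((x(P) + a2)/a1²) is a group homomorphism. -/

import Mathlib

open WeierstrassCurve

/-- The map `E(F) → F₂` sending `0 ↦ 0` and an affine point `P ↦ Tr_{F/F₂}((x(P) + a₂)/a₁²)`. -/
noncomputable def ecTraceMap {n : ℕ} (E : WeierstrassCurve.Affine (GaloisField 2 n)) :
    E.Point → ZMod 2
  | .zero => 0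
  | .some (x := x) _ _ => Algebra.trace (ZMod 2) (GaloisField 2 n) ((x + E.a₂) / E.a₁ ^ 2)

/-- The Frobenius as an algebra equivalence over `ZMod 2`. -/
noncomputable def frobAlgEquiv (n : ℕ) : GaloisField 2 n ≃ₐ[ZMod 2] GaloisField 2 n :=
  { frobeniusEquiv (GaloisField 2 n) 2 with
    commutes' := fun c => by
      show frobenius (GaloisField 2 n) 2 _ = _
      rw [frobenius_def, ← map_pow]
      congr 1
      exact ZMod.pow_card c }

lemma trace_sq {n : ℕ} (u : GaloisField 2 n) :
    Algebra.trace (ZMod 2) (GaloisField 2 n) (u ^ 2) =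
      Algebra.trace (ZMod 2) (GaloisField 2 n) u := by
  apply (algebraMap (ZMod 2) (GaloisField 2 n)).injective
  rw [trace_eq_sum_automorphisms, trace_eq_sum_automorphisms]
  have hu : u ^ 2 = frobAlgEquiv n u := rfl
  rw [hu]
  exact Fintype.sum_equiv
    ⟨fun σ => (frobAlgEquiv n).trans σ, fun σ => (frobAlgEquiv n).symm.trans σ,
      fun σ => by ext x; simp, fun σ => by ext x; simp⟩
    (fun σ => σ ((frobAlgEquiv n) u)) (fun σ => σ u) (fun σ => rfl)

lemma trace_artin_schreier {n : ℕ} (u : GaloisField 2 n) :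
    Algebra.trace (ZMod 2) (GaloisField 2 n) (u ^ 2 + u) = 0 := by
  rw [map_add, trace_sq]
  exact CharTwo.add_self_eq_zero _

open Classical in
/-- For an ordinary elliptic curve `E` over `F = F_{2ⁿ}` (i.e. `a₁ ≠ 0`), the map
`E(F) → F₂`, `0 ↦ 0`, `P ↦ Tr_{F/F₂}((x(P) + a₂)/a₁²)`, is a group homomorphism. -/
theorem stmt_8 (n : ℕ) (hn : n ≠ 0) (E : WeierstrassCurve.Affine (GaloisField 2 n))
    (hΔ : E.Δ ≠ 0) (ha1 : E.a₁ ≠ 0) :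
    ∀ P Q : E.Point, ecTraceMap E (P + Q) = ecTraceMap E P + ecTraceMap E Q := by
  intro P Q
  rcases P with _ | @⟨x₁, y₁, h₁⟩
  · rw [show (Affine.Point.zero : E.Point) = 0 from rfl, zero_add]; simp [ecTraceMap]
  rcases Q with _ | @⟨x₂, y₂, h₂⟩
  · rw [show (Affine.Point.zero : E.Point) = 0 from rfl, add_zero]; simp [ecTraceMap]
  by_cases hxy : x₁ = x₂ ∧ y₁ = E.negY x₂ y₂
  · rw [Affine.Point.add_of_Y_eq hxy.1 hxy.2]
    show (0 : ZMod 2) = _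
    show (0 : ZMod 2) =
      Algebra.trace (ZMod 2) (GaloisField 2 n) ((x₁ + E.a₂) / E.a₁ ^ 2) +
      Algebra.trace (ZMod 2) (GaloisField 2 n) ((x₂ + E.a₂) / E.a₁ ^ 2)
    rw [hxy.1, CharTwo.add_self_eq_zero]
  · have hxy' : x₁ = x₂ → y₁ ≠ E.negY x₂ y₂ := fun hx hy => hxy ⟨hx, hy⟩
    rw [Affine.Point.add_some hxy]
    set L := E.slope x₁ x₂ y₁ y₂ with hL
    show Algebra.trace (ZMod 2) (GaloisField 2 n) ((E.addX x₁ x₂ L + E.a₂) / E.a₁ ^ 2) =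
      Algebra.trace (ZMod 2) (GaloisField 2 n) ((x₁ + E.a₂) / E.a₁ ^ 2) +
      Algebra.trace (ZMod 2) (GaloisField 2 n) ((x₂ + E.a₂) / E.a₁ ^ 2)
    have h2 : (2 : GaloisField 2 n) = 0 := by
      have := CharP.cast_eq_zero (GaloisField 2 n) 2
      exact_mod_cast this
    have key : (E.addX x₁ x₂ L + E.a₂) / E.a₁ ^ 2 =
        ((L / E.a₁) ^ 2 + L / E.a₁) + ((x₁ + E.a₂) / E.a₁ ^ 2 + (x₂ + E.a₂) / E.a₁ ^ 2) := by
      rw [Affine.addX]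
      field_simp
      ring_nf
      linear_combination (-x₁ - x₂ - E.a₂) * h2
    rw [key, map_add, trace_artin_schreier, zero_add, map_add]
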